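/- For every natural number r ≥ 0, the Bell number B(2r+1) satisfies B(2r+1) = Σ_{l=0}^{r} l! · (Σ_{k=l+1}^{r+1} S(r+1,k) · C(k−1,l))². (This expresses the dimension of the half-integer partition algebra P_{r+1/2} via its cellular stratification.) -/

import Mathlib

open Finset

/-- The Bell number: the number of set partitions of an `n`-element set. -/
noncomputable def bell (n : ℕ) : ℕ :=
  Nat.card (Finpartition (Finset.univ : Finset (Fin n)))

/-- The Stirling number of the second kind. -/
noncomputable def stirling (r k : ℕ) : ℕ :=
  Nat.card {P : Finpartition (Finset.univ : Finset (Fin r)) // P.parts.card = k}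

open scoped Classical

section Bridge

variable {β : Type*} [Fintype β] [DecidableEq β]

theorem part_filter (P : Finpartition (Finset.univ : Finset β)) (a : β) :
    ({b | Setoid.ker P.part a b} : Finset β) = P.part a := by
  ext b
  simp only [Setoid.ker, Function.onFun, mem_filter, mem_univ, true_and]
  rw [P.mem_part_iff_part_eq_part (mem_univ b) (mem_univ a)]
  exact eq_comm

/-- Finpartitions of `univ` correspond to setoids. -/
noncomputable def finpartitionEquivSetoid :
    Finpartition (Finset.univ : Finset β) ≃ Setoid β where
  toFun P := Setoid.ker P.part
  invFun s := Finpartition.ofSetoid s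
  left_inv P := by
    ext t
    show t ∈ univ.image (fun a => ({b | Setoid.ker P.part a b} : Finset β)) ↔ _
    simp only [mem_image, mem_univ, true_and]
    constructor
    · rintro ⟨a, rfl⟩
      rw [part_filter]
      exact P.part_mem.mpr (mem_univ a)
    · intro ht
      obtain ⟨x, -, hx⟩ := P.part_surjOn ht
      exact ⟨x, by rw [part_filter, hx]⟩
  right_inv s := by
    ext a b
    show (Finpartition.ofSetoid s).part a = (Finpartition.ofSetoid s).part b ↔ _
    rw [← Finpartition.mem_part_ofSetoid_iff_rel (a := a) (b := b)]
    rw [(Finpartition.ofSetoid s).mem_part_iff_part_eq_part (mem_univ b) (mem_univ a), eq_comm]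

theorem card_quotient_ker_part (P : Finpartition (Finset.univ : Finset β)) :
    Nat.card (Quotient (Setoid.ker P.part)) = P.parts.card := by
  rw [Nat.card_congr (Setoid.quotientKerEquivRange P.part)]
  have h : Set.range P.part = ↑P.parts := by
    ext t
    simp only [Set.mem_range, mem_coe]
    constructor
    · rintro ⟨a, rfl⟩; exact P.part_mem.mpr (mem_univ a)
    · intro ht
      obtain ⟨x, -, hx⟩ := P.part_surjOn ht
      exact ⟨x, hx⟩
  rw [h, Nat.card_coe_set_eq, Set.ncard_coe_finset]

theorem card_setoid_eq_bell (n : ℕ) : Nat.card (Setoid (Fin n)) = bell n :=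
  (Nat.card_congr (finpartitionEquivSetoid (β := Fin n))).symm

theorem card_setoid_layer_eq_stirling (n k : ℕ) :
    Nat.card {s : Setoid (Fin n) // Nat.card (Quotient s) = k} = stirling n k := by
  refine (Nat.card_congr (Equiv.subtypeEquiv (finpartitionEquivSetoid (β := Fin n)) ?_)).symm
  intro P
  show P.parts.card = k ↔ Nat.card (Quotient (Setoid.ker P.part)) = k
  rw [card_quotient_ker_part]

/-- transfer setoids along an equivalence of ground types -/
def setoidCongr {β' : Type*} (e : β ≃ β') : Setoid β ≃ Setoid β' where
  toFun s := Setoid.comap e.symm s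
  invFun s := Setoid.comap e s
  left_inv s := Setoid.ext fun a b => by simp [Setoid.comap_rel]
  right_inv s := Setoid.ext fun a b => by simp [Setoid.comap_rel]

def quotientSetoidCongr {β' : Type*} (e : β ≃ β') (s : Setoid β) :
    Quotient s ≃ Quotient (setoidCongr e s) :=
  Quotient.congr e fun a b => by
    show s a b ↔ Setoid.comap e.symm s (e a) (e b)
    simp only [Setoid.comap_rel, Equiv.symm_apply_apply]

omit [Fintype β] [DecidableEq β] in
theorem card_setoid_congr {β' : Type*} (e : β ≃ β') :
    Nat.card (Setoid β) = Nat.card (Setoid β') :=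
  Nat.card_congr (setoidCongr e)

omit [Fintype β] [DecidableEq β] in
theorem card_setoid_layer_congr {β' : Type*} (e : β ≃ β') (k : ℕ) :
    Nat.card {s : Setoid β // Nat.card (Quotient s) = k} =
      Nat.card {s : Setoid β' // Nat.card (Quotient s) = k} :=
  Nat.card_congr (Equiv.subtypeEquiv (setoidCongr e) fun s => by
    rw [Nat.card_congr (quotientSetoidCongr e s)])

end Bridge

section Glue

variable {γ : Type} [Fintype γ] [DecidableEq γ]

/-- top inclusion -/
def tι : Option γ → Option (γ ⊕ γ) := Option.map Sum.inl

/-- bottom inclusion -/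
def bι : Option γ → Option (γ ⊕ γ) := Option.map Sum.inr

/-- Half diagram: a partition of `Option γ` with a set of marked classes, none of which
is the class of the distinguished point `none`. -/
structure Half (γ : Type) where
  P : Setoid (Option γ)
  s : Finset (Quotient P)
  hstar : Quotient.mk P none ∉ s

/-- Glued data: two half diagrams and a matching of their marked classes. -/
structure Glue (γ : Type) where
  t : Half γ
  b : Half γ
  e : {c // c ∈ t.s} ≃ {d // d ∈ b.s}

variable (x : Glue γ)

/-- where a top class goes in the glued classifying map -/
noncomputable def gtop (c : Quotient x.t.P) : Quotient x.b.P ⊕ Quotient x.t.P :=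
  if c = Quotient.mk _ none then Sum.inl (Quotient.mk _ none)
  else if h : c ∈ x.t.s then Sum.inl ((x.e ⟨c, h⟩ : {d // d ∈ x.b.s}) : Quotient x.b.P)
  else Sum.inr c

/-- the glued classifying map -/
noncomputable def gmap : Option (γ ⊕ γ) → Quotient x.b.P ⊕ Quotient x.t.P
  | none => Sum.inl (Quotient.mk _ none)
  | some (Sum.inl a) => gtop x (Quotient.mk _ (some a))
  | some (Sum.inr b) => Sum.inl (Quotient.mk _ (some b))

theorem gmap_tι (a : Option γ) : gmap x (tι a) = gtop x (Quotient.mk _ a) := by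
  cases a
  · show Sum.inl (Quotient.mk _ none) = _
    rw [gtop, if_pos rfl]
  · rfl

theorem gmap_bι (b : Option γ) : gmap x (bι b) = Sum.inl (Quotient.mk _ b) := by
  cases b <;> rfl

theorem gtop_injective : Function.Injective (gtop x) := by
  have L : Function.LeftInverse (fun z : Quotient x.b.P ⊕ Quotient x.t.P =>
      match z with
      | Sum.inr c => c
      | Sum.inl d => if h : d ∈ x.b.s then
          ((x.e.symm ⟨d, h⟩ : {c // c ∈ x.t.s}) : Quotient x.t.P)
        else Quotient.mk _ none) (gtop x) := by
    intro c
    unfold gtop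
    split_ifs with h1 h2
    · dsimp only
      rw [dif_neg x.b.hstar, h1]
    · dsimp only
      rw [dif_pos (x.e ⟨c, h2⟩).2]
      exact congrArg Subtype.val (x.e.symm_apply_apply ⟨c, h2⟩)
    · rfl
  exact L.injective

/-- The glued setoid. -/
noncomputable def glue : Setoid (Option (γ ⊕ γ)) := Setoid.ker (gmap x)

theorem glue_rel_iff (ω ω' : Option (γ ⊕ γ)) : (glue x) ω ω' ↔ gmap x ω = gmap x ω' :=
  Iff.rfl

theorem glue_comap_tι : (glue x).comap tι = x.t.P := by
  ext a b
  rw [Setoid.comap_rel, glue_rel_iff, gmap_tι, gmap_tι,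
    (gtop_injective x).eq_iff, Quotient.eq]

theorem glue_comap_bι : (glue x).comap bι = x.b.P := by
  ext a b
  rw [Setoid.comap_rel, glue_rel_iff, gmap_bι, gmap_bι, Sum.inl.injEq, Quotient.eq]

/-- a top element is in a marked class -/
def mtop (Q : Setoid (Option (γ ⊕ γ))) (a : Option γ) : Prop :=
  ¬ Q (tι a) (tι none) ∧ ∃ b : γ, Q (tι a) (bι (some b))

/-- a bottom element is in a marked class -/
def mbot (Q : Setoid (Option (γ ⊕ γ))) (b : Option γ) : Prop :=
  ¬ Q (bι b) (bι none) ∧ ∃ a : γ, Q (bι b) (tι (some a))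

theorem gtop_star : gtop x (Quotient.mk _ none) = Sum.inl (Quotient.mk _ none) := by
  rw [gtop, if_pos rfl]

theorem gtop_mem {c : Quotient x.t.P} (h : c ∈ x.t.s) :
    gtop x c = Sum.inl ((x.e ⟨c, h⟩ : {d // d ∈ x.b.s}) : Quotient x.b.P) := by
  rw [gtop, if_neg (by rintro rfl; exact x.t.hstar h), dif_pos h]

theorem gtop_unmarked {c : Quotient x.t.P} (hc : c ≠ Quotient.mk _ none) (h : c ∉ x.t.s) :
    gtop x c = Sum.inr c := by
  rw [gtop, if_neg hc, dif_neg h]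

theorem exists_some_rep {P : Setoid (Option γ)} {v : Quotient P}
    (hv : v ≠ Quotient.mk P none) : ∃ b : γ, v = Quotient.mk P (some b) := by
  obtain ⟨w, rfl⟩ := Quotient.exists_rep v
  cases w with
  | none => exact absurd rfl hv
  | some b => exact ⟨b, rfl⟩

theorem mtop_glue (a : Option γ) : mtop (glue x) a ↔ Quotient.mk x.t.P a ∈ x.t.s := by
  constructor
  · rintro ⟨hn, b, hb⟩
    rw [glue_rel_iff, gmap_tι, gmap_tι, gtop_star] at hn
    rw [glue_rel_iff, gmap_tι, gmap_bι] at hb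
    by_cases h1 : Quotient.mk x.t.P a = Quotient.mk _ none
    · rw [h1, gtop_star] at hb hn
      exact absurd rfl hn
    by_cases h2 : Quotient.mk x.t.P a ∈ x.t.s
    · exact h2
    · rw [gtop_unmarked x h1 h2] at hb
      exact absurd hb (by simp)
  · intro h
    have hv : ((x.e ⟨_, h⟩ : {d // d ∈ x.b.s}) : Quotient x.b.P) ≠ Quotient.mk _ none := by
      intro hc
      exact x.b.hstar (hc ▸ (x.e ⟨_, h⟩).2)
    obtain ⟨b, hb⟩ := exists_some_rep hv
    refine ⟨?_, b, ?_⟩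
    · rw [glue_rel_iff, gmap_tι, gmap_tι, gtop_star, gtop_mem x h]
      simp only [Sum.inl.injEq]
      intro hc
      exact x.b.hstar (hc ▸ (x.e ⟨_, h⟩).2)
    · rw [glue_rel_iff, gmap_tι, gmap_bι, gtop_mem x h, hb]

theorem mbot_glue (b : Option γ) : mbot (glue x) b ↔ Quotient.mk x.b.P b ∈ x.b.s := by
  constructor
  · rintro ⟨hn, a, ha⟩
    rw [glue_rel_iff, gmap_bι, gmap_tι] at ha
    by_cases h1 : Quotient.mk x.t.P (some a) = Quotient.mk _ none
    · rw [h1, gtop_star] at ha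
      rw [glue_rel_iff, gmap_bι, gmap_bι] at hn
      exact absurd ha hn
    by_cases h2 : Quotient.mk x.t.P (some a) ∈ x.t.s
    · rw [gtop_mem x h2] at ha
      rw [Sum.inl.inj ha]
      exact (x.e ⟨_, h2⟩).2
    · rw [gtop_unmarked x h1 h2] at ha
      exact absurd ha (by simp)
  · intro h
    set c : {c // c ∈ x.t.s} := x.e.symm ⟨_, h⟩ with hc
    have hcn : (c : Quotient x.t.P) ≠ Quotient.mk _ none := by
      intro hcc
      exact x.t.hstar (hcc ▸ c.2)
    obtain ⟨a, ha⟩ := exists_some_rep hcn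
    have key : gtop x (c : Quotient x.t.P) = Sum.inl (Quotient.mk x.b.P b) := by
      rw [gtop_mem x c.2]
      congr 1
      have : x.e ⟨(c : Quotient x.t.P), c.2⟩ = ⟨_, h⟩ := by
        rw [hc]
        exact x.e.apply_symm_apply _
      rw [this]
    refine ⟨?_, a, ?_⟩
    · rw [glue_rel_iff, gmap_bι, gmap_bι]
      simp only [Sum.inl.injEq]
      intro hb
      exact x.b.hstar (hb ▸ h)
    · rw [glue_rel_iff, gmap_bι, gmap_tι, ← ha, key]

theorem glue_link (a b : Option γ) (h : Quotient.mk x.t.P a ∈ x.t.s) :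
    (glue x) (tι a) (bι b) ↔
      ((x.e ⟨_, h⟩ : {d // d ∈ x.b.s}) : Quotient x.b.P) = Quotient.mk _ b := by
  rw [glue_rel_iff, gmap_tι, gmap_bι, gtop_mem x h, Sum.inl.injEq]

theorem glue_injective : Function.Injective (glue (γ := γ)) := by
  rintro ⟨⟨P₁, s₁, hs₁⟩, ⟨P₂, s₂, hs₂⟩, e⟩ ⟨⟨P₁', s₁', hs₁'⟩, ⟨P₂', s₂', hs₂'⟩, e'⟩ hQ
  have hP₁ : P₁ = P₁' := by
    have h1 := glue_comap_tι (⟨⟨P₁, s₁, hs₁⟩, ⟨P₂, s₂, hs₂⟩, e⟩ : Glue γ)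
    have h2 := glue_comap_tι (⟨⟨P₁', s₁', hs₁'⟩, ⟨P₂', s₂', hs₂'⟩, e'⟩ : Glue γ)
    rw [hQ] at h1
    exact h1.symm.trans h2
  subst hP₁
  have hP₂ : P₂ = P₂' := by
    have h1 := glue_comap_bι (⟨⟨P₁, s₁, hs₁⟩, ⟨P₂, s₂, hs₂⟩, e⟩ : Glue γ)
    have h2 := glue_comap_bι (⟨⟨P₁, s₁', hs₁'⟩, ⟨P₂', s₂', hs₂'⟩, e'⟩ : Glue γ)
    rw [hQ] at h1
    exact h1.symm.trans h2
  subst hP₂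
  have hs : s₁ = s₁' := by
    ext c
    obtain ⟨a, rfl⟩ := Quotient.exists_rep c
    have hmid : mtop (glue (⟨⟨P₁, s₁, hs₁⟩, ⟨P₂, s₂, hs₂⟩, e⟩ : Glue γ)) a ↔
        mtop (glue (⟨⟨P₁, s₁', hs₁'⟩, ⟨P₂, s₂', hs₂'⟩, e'⟩ : Glue γ)) a := by rw [hQ]
    exact ((mtop_glue _ a).symm.trans hmid).trans (mtop_glue _ a)
  subst hs
  have hs2 : s₂ = s₂' := by
    ext c
    obtain ⟨b, rfl⟩ := Quotient.exists_rep c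
    have hmid : mbot (glue (⟨⟨P₁, s₁, hs₁⟩, ⟨P₂, s₂, hs₂⟩, e⟩ : Glue γ)) b ↔
        mbot (glue (⟨⟨P₁, s₁, hs₁'⟩, ⟨P₂, s₂', hs₂'⟩, e'⟩ : Glue γ)) b := by rw [hQ]
    exact ((mbot_glue _ b).symm.trans hmid).trans (mbot_glue _ b)
  subst hs2
  have he : e = e' := by
    apply Equiv.ext
    rintro ⟨cv, hcm⟩
    obtain ⟨a, rfl⟩ := Quotient.exists_rep cv
    have hvn : ((e ⟨_, hcm⟩ : {d // d ∈ s₂}) : Quotient P₂) ≠ Quotient.mk _ none := by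
      intro hc
      exact hs₂ (hc ▸ (e ⟨_, hcm⟩).2)
    obtain ⟨w, hw⟩ := Quotient.exists_rep ((e ⟨_, hcm⟩ : {d // d ∈ s₂}) : Quotient P₂)
    have hlink : (glue (⟨⟨P₁, s₁, hs₁⟩, ⟨P₂, s₂, hs₂⟩, e⟩ : Glue γ)) (tι a) (bι w) :=
      (glue_link _ a w hcm).mpr hw.symm
    rw [hQ] at hlink
    have : ((e' ⟨_, hcm⟩ : {d // d ∈ s₂}) : Quotient P₂) = Quotient.mk _ w :=
      (glue_link (⟨⟨P₁, s₁, hs₁'⟩, ⟨P₂, s₂, hs₂'⟩, e'⟩ : Glue γ) a w hcm).mp hlink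
    exact Subtype.ext (hw ▸ this.symm)
  subst he
  rfl

theorem glue_surjective : Function.Surjective (glue (γ := γ)) := by
  intro Q
  set P₁ : Setoid (Option γ) := Q.comap tι with hP₁def
  set P₂ : Setoid (Option γ) := Q.comap bι with hP₂def
  set s₁ : Finset (Quotient P₁) :=
    univ.filter (fun c => ∃ a, Quotient.mk P₁ a = c ∧ mtop Q a) with hs₁def
  set s₂ : Finset (Quotient P₂) :=
    univ.filter (fun c => ∃ b, Quotient.mk P₂ b = c ∧ mbot Q b) with hs₂def
  have tEq : ∀ a a' : Option γ, (Quotient.mk P₁ a = Quotient.mk P₁ a') ↔ Q (tι a) (tι a') :=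
    fun _ _ => Quotient.eq
  have bEq : ∀ b b' : Option γ, (Quotient.mk P₂ b = Quotient.mk P₂ b') ↔ Q (bι b) (bι b') :=
    fun _ _ => Quotient.eq
  have mem_s₁ : ∀ a : Option γ, Quotient.mk P₁ a ∈ s₁ ↔ mtop Q a := by
    intro a
    rw [hs₁def, mem_filter]
    simp only [mem_univ, true_and]
    constructor
    · rintro ⟨a', ha', hm1, b, hm2⟩
      have hrel : Q (tι a') (tι a) := (tEq a' a).mp ha'
      exact ⟨fun h => hm1 (Q.trans' hrel h), b, Q.trans' (Q.symm' hrel) hm2⟩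
    · intro hm
      exact ⟨a, rfl, hm⟩
  have mem_s₂ : ∀ b : Option γ, Quotient.mk P₂ b ∈ s₂ ↔ mbot Q b := by
    intro b
    rw [hs₂def, mem_filter]
    simp only [mem_univ, true_and]
    constructor
    · rintro ⟨b', hb', hm1, a, hm2⟩
      have hrel : Q (bι b') (bι b) := (bEq b' b).mp hb'
      exact ⟨fun h => hm1 (Q.trans' hrel h), a, Q.trans' (Q.symm' hrel) hm2⟩
    · intro hm
      exact ⟨b, rfl, hm⟩
  have hstar₁ : Quotient.mk P₁ none ∉ s₁ := by
    intro h
    exact ((mem_s₁ none).mp h).1 (Q.refl' _)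
  have hstar₂ : Quotient.mk P₂ none ∉ s₂ := by
    intro h
    exact ((mem_s₂ none).mp h).1 (Q.refl' _)
  have key₁ : ∀ c : {c // c ∈ s₁}, ∃ d : {d // d ∈ s₂}, ∃ a b,
      Quotient.mk P₁ a = c.1 ∧ Quotient.mk P₂ b = d.1 ∧ Q (tι a) (bι b) := by
    rintro ⟨c, hc⟩
    obtain ⟨a, rfl⟩ := Quotient.exists_rep c
    have hm : mtop Q a := (mem_s₁ a).mp hc
    obtain ⟨b, hb⟩ := hm.2
    have hd : mbot Q (some b) := by
      refine ⟨fun h => hm.1 (Q.trans' hb h), ?_⟩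
      cases a with
      | none => exact absurd (Q.refl' _) hm.1
      | some a' => exact ⟨a', Q.symm' hb⟩
    exact ⟨⟨_, (mem_s₂ (some b)).mpr hd⟩, a, some b, rfl, rfl, hb⟩
  have key₂ : ∀ d : {d // d ∈ s₂}, ∃ c : {c // c ∈ s₁}, ∃ a b,
      Quotient.mk P₁ a = c.1 ∧ Quotient.mk P₂ b = d.1 ∧ Q (tι a) (bι b) := by
    rintro ⟨d, hd⟩
    obtain ⟨b, rfl⟩ := Quotient.exists_rep d
    have hm : mbot Q b := (mem_s₂ b).mp hd
    obtain ⟨a, ha⟩ := hm.2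
    have hc : mtop Q (some a) := by
      refine ⟨fun h => hm.1 (Q.trans' ha h), ?_⟩
      cases b with
      | none => exact absurd (Q.refl' _) hm.1
      | some b' => exact ⟨b', Q.symm' ha⟩
    exact ⟨⟨_, (mem_s₁ (some a)).mpr hc⟩, some a, b, rfl, rfl, Q.symm' ha⟩
  have uniq : ∀ a a' b b', Q (tι a) (bι b) → Q (tι a') (bι b') →
      (Quotient.mk P₁ a = Quotient.mk P₁ a' ↔ Quotient.mk P₂ b = Quotient.mk P₂ b') := by
    intro a a' b b' h h'
    constructor
    · intro hh
      exact (bEq b b').mpr (Q.trans' (Q.symm' h) (Q.trans' ((tEq a a').mp hh) h'))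
    · intro hh
      exact (tEq a a').mpr (Q.trans' h (Q.trans' ((bEq b b').mp hh) (Q.symm' h')))
  set f : {c // c ∈ s₁} → {d // d ∈ s₂} := fun c => (key₁ c).choose with hfdef
  set g : {d // d ∈ s₂} → {c // c ∈ s₁} := fun d => (key₂ d).choose with hgdef
  have hleft : Function.LeftInverse g f := by
    intro c
    obtain ⟨a, b, ha, hb, hq⟩ := (key₁ c).choose_spec
    obtain ⟨a', b', ha', hb', hq'⟩ := (key₂ (f c)).choose_spec
    have hbb : Quotient.mk P₂ b = Quotient.mk P₂ b' := by
      rw [hb, hb']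
    have haa : Quotient.mk P₁ a = Quotient.mk P₁ a' := (uniq a a' b b' hq hq').mpr hbb
    apply Subtype.ext
    rw [← ha', ← haa, ha]
  have hright : Function.RightInverse g f := by
    intro d
    obtain ⟨a, b, ha, hb, hq⟩ := (key₂ d).choose_spec
    obtain ⟨a', b', ha', hb', hq'⟩ := (key₁ (g d)).choose_spec
    have haa : Quotient.mk P₁ a = Quotient.mk P₁ a' := by
      rw [ha, ha']
    have hbb : Quotient.mk P₂ b = Quotient.mk P₂ b' := (uniq a a' b b' hq hq').mp haa
    apply Subtype.ext
    rw [← hb', ← hbb, hb]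
  refine ⟨⟨⟨P₁, s₁, hstar₁⟩, ⟨P₂, s₂, hstar₂⟩, ⟨f, g, hleft, hright⟩⟩, Setoid.ext fun ω ω' => ?_⟩
  set x : Glue γ := ⟨⟨P₁, s₁, hstar₁⟩, ⟨P₂, s₂, hstar₂⟩, ⟨f, g, hleft, hright⟩⟩ with hxdef
  have htt : ∀ a a', (gmap x (tι a) = gmap x (tι a')) ↔ Q (tι a) (tι a') := by
    intro a a'
    rw [gmap_tι, gmap_tι, (gtop_injective x).eq_iff, Quotient.eq]
    exact Iff.rfl
  have hbb : ∀ b b', (gmap x (bι b) = gmap x (bι b')) ↔ Q (bι b) (bι b') := by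
    intro b b'
    rw [gmap_bι, gmap_bι, Sum.inl.injEq, Quotient.eq]
    exact Iff.rfl
  have htb : ∀ a b, (gmap x (tι a) = gmap x (bι b)) ↔ Q (tι a) (bι b) := by
    intro a b
    rw [gmap_tι, gmap_bι]
    by_cases h1 : Quotient.mk P₁ a = Quotient.mk P₁ none
    · rw [h1, gtop_star, Sum.inl.injEq]
      have han : Q (tι a) (tι none) := (tEq a none).mp h1
      constructor
      · intro h
        exact Q.trans' han ((bEq none b).mp h)
      · intro h
        exact (bEq none b).mpr (Q.trans' (Q.symm' han) h)
    by_cases h2 : Quotient.mk P₁ a ∈ s₁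
    · rw [gtop_mem x h2, Sum.inl.injEq]
      show ((f ⟨Quotient.mk P₁ a, h2⟩ : {d // d ∈ s₂}) : Quotient P₂) = Quotient.mk P₂ b ↔ _
      obtain ⟨a₀, b₀, ha₀, hb₀, hq₀⟩ := (key₁ ⟨Quotient.mk P₁ a, h2⟩).choose_spec
      have hrel : Q (tι a₀) (tι a) := (tEq a₀ a).mp ha₀
      constructor
      · intro h
        have : Quotient.mk P₂ b₀ = Quotient.mk P₂ b := hb₀.trans h
        exact Q.trans' (Q.symm' hrel) (Q.trans' hq₀ ((bEq b₀ b).mp this))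
      · intro h
        have : Quotient.mk P₂ b₀ = Quotient.mk P₂ b :=
          (bEq b₀ b).mpr (Q.trans' (Q.symm' hq₀) (Q.trans' hrel h))
        rw [← hb₀, this]
    · rw [gtop_unmarked x h1 h2]
      constructor
      · intro h
        exact absurd h (by simp)
      · intro h
        exfalso
        apply h2
        apply (mem_s₁ a).mpr
        refine ⟨fun hn => h1 ((tEq a none).mpr hn), ?_⟩
        cases b with
        | none => exact absurd ((tEq a none).mpr h) h1
        | some b₀ => exact ⟨b₀, h⟩
  have hcase : ∀ ω : Option (γ ⊕ γ), (∃ a, ω = tι a) ∨ (∃ b, ω = bι b) := by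
    intro ω
    rcases ω with _ | (a | b)
    · exact Or.inr ⟨none, rfl⟩
    · exact Or.inl ⟨some a, rfl⟩
    · exact Or.inr ⟨some b, rfl⟩
  rcases hcase ω with ⟨a, rfl⟩ | ⟨b, rfl⟩ <;> rcases hcase ω' with ⟨a', rfl⟩ | ⟨b', rfl⟩
  · exact htt a a'
  · exact htb a b'
  · exact ⟨fun h => Q.symm' ((htb a' b).mp ((htt a' a').mpr (Q.refl' _) ▸ h.symm)),
      fun h => ((htb a' b).mpr (Q.symm' h)).symm⟩
  · exact hbb b b'

theorem card_setoid_eq_card_glue :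
    Nat.card (Setoid (Option (γ ⊕ γ))) = Nat.card (Glue γ) :=
  (Nat.card_congr (Equiv.ofBijective glue ⟨glue_injective, glue_surjective⟩)).symm

instance setoidFinite {β : Type*} [Finite β] : Finite (Setoid β) :=
  Finite.of_injective (fun s : Setoid β => s.r)
    (fun s t h => Setoid.ext fun a b => iff_of_eq (congrFun (congrFun h a) b))

noncomputable instance : Finite (Half γ) := by
  refine Finite.of_injective
    (fun h : Half γ => (⟨h.P, h.s⟩ : Σ P : Setoid (Option γ), Finset (Quotient P))) ?_
  rintro ⟨P, s, hs⟩ ⟨P', s', hs'⟩ h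
  obtain ⟨rfl, h2⟩ := Sigma.mk.inj_iff.mp h
  obtain rfl := eq_of_heq h2
  rfl

/-- `Glue` as a sigma type. -/
def glueEquivSigma : Glue γ ≃ Σ t : Half γ, Σ b : Half γ, ({c // c ∈ t.s} ≃ {d // d ∈ b.s}) where
  toFun x := ⟨x.t, x.b, x.e⟩
  invFun y := ⟨y.1, y.2.1, y.2.2⟩
  left_inv x := rfl
  right_inv y := rfl

noncomputable instance : Finite (Glue γ) := Finite.of_equiv _ glueEquivSigma.symm

theorem card_equiv_finsets {α₁ α₂ : Type*} [Fintype α₁] [DecidableEq α₁]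
    [Fintype α₂] [DecidableEq α₂] (s : Finset α₁) (t : Finset α₂) :
    Nat.card ({c // c ∈ s} ≃ {d // d ∈ t}) =
      if s.card = t.card then Nat.factorial s.card else 0 := by
  split_ifs with h
  · have e : {c // c ∈ s} ≃ {d // d ∈ t} :=
      Fintype.equivOfCardEq (by rw [Fintype.card_coe, Fintype.card_coe, h])
    rw [Nat.card_eq_fintype_card, Fintype.card_equiv e, Fintype.card_coe]
  · have : IsEmpty ({c // c ∈ s} ≃ {d // d ∈ t}) :=
      ⟨fun e => h (by simpa [Fintype.card_coe] using Fintype.card_congr e)⟩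
    exact Nat.card_of_isEmpty

theorem half_card_le (r : ℕ) (hγ : Fintype.card γ = r) (h : Half γ) : h.s.card ≤ r := by
  have h1 : h.s ⊆ univ.erase (Quotient.mk h.P none) :=
    (subset_erase).mpr ⟨subset_univ _, h.hstar⟩
  have h2 := card_le_card h1
  rw [card_erase_of_mem (mem_univ _), card_univ] at h2
  have h3 : Fintype.card (Quotient h.P) ≤ Fintype.card (Option γ) :=
    Fintype.card_le_of_surjective (Quotient.mk h.P) (fun q => Quotient.exists_rep q)
  rw [Fintype.card_option, hγ] at h3
  omega

theorem card_glue_eq (r : ℕ) (hγ : Fintype.card γ = r) :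
    Nat.card (Glue γ) = ∑ l ∈ range (r + 1),
      l.factorial * (Nat.card {h : Half γ // h.s.card = l}) ^ 2 := by
  letI : Fintype (Half γ) := Fintype.ofFinite _
  have hN : ∀ l : ℕ, Nat.card {h : Half γ // h.s.card = l} =
      (univ.filter fun h : Half γ => h.s.card = l).card := by
    intro l
    rw [Nat.card_eq_fintype_card, Fintype.card_subtype]
  calc Nat.card (Glue γ)
      = Fintype.card (Σ t : Half γ, Σ b : Half γ, ({c // c ∈ t.s} ≃ {d // d ∈ b.s})) := by
        rw [← Nat.card_eq_fintype_card]
        exact Nat.card_congr glueEquivSigma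
    _ = ∑ t : Half γ, ∑ b : Half γ, Nat.card ({c // c ∈ t.s} ≃ {d // d ∈ b.s}) := by
        rw [Fintype.card_sigma]
        exact Finset.sum_congr rfl fun t _ => by
          rw [Fintype.card_sigma]
          exact Finset.sum_congr rfl fun b _ => (Nat.card_eq_fintype_card).symm
    _ = ∑ t : Half γ, ∑ b : Half γ, (if t.s.card = b.s.card then (t.s.card).factorial else 0) := by
        exact Finset.sum_congr rfl fun t _ => Finset.sum_congr rfl fun b _ =>
          card_equiv_finsets t.s b.s
    _ = ∑ t : Half γ, (t.s.card).factorial *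
          (univ.filter fun h : Half γ => h.s.card = t.s.card).card := by
        refine Finset.sum_congr rfl fun t _ => ?_
        rw [Finset.sum_ite, Finset.sum_const_zero, add_zero, Finset.sum_const, smul_eq_mul]
        rw [mul_comm]
        have hf : (univ.filter fun x : Half γ => t.s.card = x.s.card) =
            univ.filter fun h : Half γ => h.s.card = t.s.card :=
          Finset.filter_congr (fun b _ => eq_comm)
        rw [hf]
    _ = ∑ l ∈ range (r + 1), ∑ t ∈ univ.filter (fun t : Half γ => t.s.card = l),
          (t.s.card).factorial * (univ.filter fun h : Half γ => h.s.card = t.s.card).card := by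
        rw [Finset.sum_fiberwise_of_maps_to]
        intro t _
        exact mem_range.mpr (Nat.lt_succ_of_le (half_card_le r hγ t))
    _ = ∑ l ∈ range (r + 1),
          l.factorial * (Nat.card {h : Half γ // h.s.card = l}) ^ 2 := by
        refine Finset.sum_congr rfl fun l hl => ?_
        rw [Finset.sum_congr rfl (fun t ht => by
          rw [(Finset.mem_filter.mp ht).2] :
            ∀ t ∈ univ.filter (fun t : Half γ => t.s.card = l), _ = l.factorial *
              (univ.filter fun h : Half γ => h.s.card = l).card)]
        rw [Finset.sum_const, smul_eq_mul, hN l, sq]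
        ring

/-- Half diagrams with `l` marked classes, as a sigma type over the partition. -/
noncomputable def halfLayerEquiv (l : ℕ) :
    {h : Half γ // h.s.card = l} ≃
      Σ P : Setoid (Option γ),
        {s // s ∈ (univ.erase (Quotient.mk P none)).powersetCard l} where
  toFun h := ⟨h.1.P, ⟨h.1.s, Finset.mem_powersetCard.mpr
    ⟨(subset_erase).mpr ⟨subset_univ _, h.1.hstar⟩, h.2⟩⟩⟩
  invFun y := ⟨⟨y.1, y.2.1, fun hm =>
      (mem_erase.mp ((Finset.mem_powersetCard.mp y.2.2).1 hm)).1 rfl⟩,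
    (Finset.mem_powersetCard.mp y.2.2).2⟩
  left_inv h := rfl
  right_inv y := rfl

theorem card_quotient_pos (P : Setoid (Option γ)) : 0 < Nat.card (Quotient P) :=
  Nat.card_pos

theorem nat_card_sigma {ι : Type*} [Fintype ι] (f : ι → Type*) [∀ i, Finite (f i)] :
    Nat.card (Σ i, f i) = ∑ i, Nat.card (f i) := by
  letI : ∀ i, Fintype (f i) := fun i => Fintype.ofFinite _
  rw [Nat.card_eq_fintype_card, Fintype.card_sigma]
  exact Finset.sum_congr rfl fun i _ => (Nat.card_eq_fintype_card).symm

theorem card_half_layer (r l : ℕ) (hγ : Fintype.card γ = r) :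
    Nat.card {h : Half γ // h.s.card = l} =
      ∑ k ∈ Icc (l + 1) (r + 1),
        Nat.card {P : Setoid (Option γ) // Nat.card (Quotient P) = k} * (k - 1).choose l := by
  letI : Fintype (Setoid (Option γ)) := Fintype.ofFinite _
  have hM : ∀ k : ℕ, Nat.card {P : Setoid (Option γ) // Nat.card (Quotient P) = k} =
      (univ.filter fun P : Setoid (Option γ) => Nat.card (Quotient P) = k).card := by
    intro k
    rw [Nat.card_eq_fintype_card, Fintype.card_subtype]
  have hbound : ∀ P : Setoid (Option γ), Nat.card (Quotient P) ≤ r + 1 := by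
    intro P
    rw [Nat.card_eq_fintype_card]
    have h3 : Fintype.card (Quotient P) ≤ Fintype.card (Option γ) :=
      Fintype.card_le_of_surjective (Quotient.mk P) (fun q => Quotient.exists_rep q)
    rwa [Fintype.card_option, hγ] at h3
  calc Nat.card {h : Half γ // h.s.card = l}
      = ∑ P : Setoid (Option γ),
          Nat.card {s // s ∈ (univ.erase (Quotient.mk P none)).powersetCard l} := by
        rw [Nat.card_congr (halfLayerEquiv l), nat_card_sigma]
    _ = ∑ P : Setoid (Option γ), (Nat.card (Quotient P) - 1).choose l := by
        refine Finset.sum_congr rfl fun P _ => ?_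
        rw [Nat.card_eq_finsetCard, Finset.card_powersetCard,
          card_erase_of_mem (mem_univ _), card_univ, Nat.card_eq_fintype_card]
    _ = ∑ k ∈ range (r + 2), ∑ P ∈ univ.filter
          (fun P : Setoid (Option γ) => Nat.card (Quotient P) = k),
          (Nat.card (Quotient P) - 1).choose l := by
        rw [Finset.sum_fiberwise_of_maps_to]
        intro P _
        exact mem_range.mpr (Nat.lt_succ_of_le (hbound P))
    _ = ∑ k ∈ range (r + 2),
          Nat.card {P : Setoid (Option γ) // Nat.card (Quotient P) = k} * (k - 1).choose l := by
        refine Finset.sum_congr rfl fun k _ => ?_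
        rw [Finset.sum_congr rfl (fun P hP => by
          rw [(Finset.mem_filter.mp hP).2] :
            ∀ P ∈ univ.filter (fun P : Setoid (Option γ) => Nat.card (Quotient P) = k),
              _ = (k - 1).choose l)]
        rw [Finset.sum_const, smul_eq_mul, hM k]
    _ = ∑ k ∈ Icc (l + 1) (r + 1),
          Nat.card {P : Setoid (Option γ) // Nat.card (Quotient P) = k} * (k - 1).choose l := by
        refine (Finset.sum_subset ?_ ?_).symm
        · intro k hk
          rw [mem_Icc] at hk
          exact mem_range.mpr (by omega)
        · intro k hk hk2
          rw [mem_range] at hk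
          rw [mem_Icc] at hk2
          rcases Nat.eq_zero_or_pos k with rfl | hkpos
          · have : {P : Setoid (Option γ) // Nat.card (Quotient P) = 0} → False := by
              rintro ⟨P, hP⟩
              exact absurd hP (by have := card_quotient_pos P; omega)
            have h0 : Nat.card {P : Setoid (Option γ) // Nat.card (Quotient P) = 0} = 0 :=
              @Nat.card_of_isEmpty _ ⟨this⟩
            rw [h0, zero_mul]
          · have hkl : k ≤ l := by omega
            rw [Nat.choose_eq_zero_of_lt (by omega), mul_zero]

theorem card_setoid_option_layer (r k : ℕ) (hγ : Fintype.card γ = r) :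
    Nat.card {P : Setoid (Option γ) // Nat.card (Quotient P) = k} = stirling (r + 1) k := by
  rw [← card_setoid_layer_eq_stirling (r + 1) k]
  exact card_setoid_layer_congr
    (Fintype.equivFinOfCardEq (by rw [Fintype.card_option, hγ]) : Option γ ≃ Fin (r + 1)) k

theorem card_setoid_glue_ground (r : ℕ) (hγ : Fintype.card γ = r) :
    Nat.card (Setoid (Option (γ ⊕ γ))) = bell (2 * r + 1) := by
  rw [← card_setoid_eq_bell (2 * r + 1)]
  exact card_setoid_congr (Fintype.equivFinOfCardEq (by
    rw [Fintype.card_option, Fintype.card_sum, hγ]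
    omega))

end Glue

/-- For every `r ≥ 0`,
`B(2r+1) = Σ_{l=0}^{r} l! · (Σ_{k=l+1}^{r+1} S(r+1,k) · C(k−1,l))²`. -/
theorem bell_odd_eq_sum_layers (r : ℕ) :
    bell (2 * r + 1) =
      ∑ l ∈ Finset.range (r + 1),
        Nat.factorial l *
          (∑ k ∈ Finset.Icc (l + 1) (r + 1),
            stirling (r + 1) k * Nat.choose (k - 1) l) ^ 2 := by
  have hγ : Fintype.card (Fin r) = r := Fintype.card_fin r
  rw [← card_setoid_glue_ground (γ := Fin r) r hγ, card_setoid_eq_card_glue,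
    card_glue_eq (γ := Fin r) r hγ]
  refine Finset.sum_congr rfl fun l hl => ?_
  rw [card_half_layer (γ := Fin r) r l hγ]
  congr 1
  congr 1
  exact Finset.sum_congr rfl fun k _ => by rw [card_setoid_option_layer (γ := Fin r) r k hγ]
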